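/- arXiv:0909.0501 — 3 statements merged into one kernel-verified Lean document; each statement's English description precedes it below -/
import Mathlib

section
/- Under assumptions (7)–(10) of the paper, the map u ↦ [F'(u)]⁻¹(F(u) − h) is locally Lipschitz on the ball B_a(U, R) with respect to the H_a norm. -/
/-- Under assumptions (7)–(10) of the paper (scale of Hilbert spaces, modelled
by a norm-nonincreasing continuous embedding `J : Hₐ → Hₐ₊δ`, isomorphism
bounds on `A u = F' u`, and stability bounds), the Newton-type vector field
`u ↦ (F' u)⁻¹ (F u - h)` is locally Lipschitz on the ball `B_a(U, R)`. -/
theorem stmt9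
    {Ha Hb : Type*} [NormedAddCommGroup Ha] [InnerProductSpace ℝ Ha]
    [NormedAddCommGroup Hb] [InnerProductSpace ℝ Hb]
    (J : Ha →L[ℝ] Hb) (hJinj : Function.Injective J)
    (hJ : ∀ x : Ha, ‖J x‖ ≤ ‖x‖)
    (F : Ha → Hb) (A : Ha → (Ha ≃L[ℝ] Hb))
    (U : Ha) (h f : Hb) (R c₀ c₀' c : ℝ)
    (hR : 0 < R) (hc₀ : 0 < c₀) (hc₀' : 0 < c₀') (hc : 0 < c)
    (hFU : F U = f)
    (hFcont : ContinuousOn F (Metric.closedBall U R))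
    (hderiv : ∀ u ∈ Metric.closedBall U R,
      HasFDerivWithinAt F ((A u : Ha →L[ℝ] Hb)) (Metric.closedBall U R) u)
    (h8 : ∀ u ∈ Metric.closedBall U R, ∀ v : Ha,
      c₀ * ‖v‖ ≤ ‖(A u) v‖ ∧ ‖(A u) v‖ ≤ c₀' * ‖v‖)
    (h9 : ∀ v ∈ Metric.closedBall U R, ∀ w ∈ Metric.closedBall U R, ∀ q : Ha,
      ‖(A v).symm ((A w) q)‖ ≤ c * ‖q‖)
    (h10 : ∀ u ∈ Metric.closedBall U R, ∀ v ∈ Metric.closedBall U R, ∀ q : Ha,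
      ‖(A u).symm ((A u) q - (A v) q)‖ ≤ c * ‖u - v‖ * ‖q‖)
    (hFh : ∀ v ∈ Metric.closedBall U R, ‖(A v).symm (F v - h)‖ ≤ c) :
    LocallyLipschitzOn (Metric.closedBall U R)
      (fun u : Ha => (A u).symm (F u - h)) := by
  set s := Metric.closedBall U R with hs
  have hconv : Convex ℝ s := convex_closedBall U R
  -- mean value: F is c₀'-Lipschitz on s
  have hFlip : ∀ u ∈ s, ∀ v ∈ s, ‖F u - F v‖ ≤ c₀' * ‖u - v‖ := by
    intro u hu v hv
    exact hconv.norm_image_sub_le_of_norm_hasFDerivWithin_le hderiv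
      (fun x hx => ContinuousLinearMap.opNorm_le_bound _ hc₀'.le (fun w => (h8 x hx w).2))
      hv hu
  -- bound on the inverse
  have hsymm : ∀ u ∈ s, ∀ w : Hb, ‖(A u).symm w‖ ≤ ‖w‖ / c₀ := by
    intro u hu w
    have h1 := (h8 u hu ((A u).symm w)).1
    rw [ContinuousLinearEquiv.apply_symm_apply] at h1
    exact (le_div_iff₀' hc₀).2 h1
  have hK : (0 : ℝ) ≤ c₀' / c₀ + c * c := by positivity
  have key : LipschitzOnWith (c₀' / c₀ + c * c).toNNReal
      (fun u : Ha => (A u).symm (F u - h)) s := by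
    rw [lipschitzOnWith_iff_norm_sub_le]
    intro u hu v hv
    rw [Real.coe_toNNReal _ hK]
    have hdecomp : (A u).symm (F u - h) - (A v).symm (F v - h)
        = (A u).symm (F u - F v)
          - ((A u).symm ((A u) ((A v).symm (F v - h)) - (A v) ((A v).symm (F v - h)))) := by
      simp only [ContinuousLinearEquiv.apply_symm_apply, map_sub,
        ContinuousLinearEquiv.symm_apply_apply]
      abel
    have b1 : ‖(A u).symm (F u - F v)‖ ≤ c₀' / c₀ * ‖u - v‖ := by
      calc ‖(A u).symm (F u - F v)‖ ≤ ‖F u - F v‖ / c₀ := hsymm u hu _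
        _ ≤ (c₀' * ‖u - v‖) / c₀ := by
            gcongr
            exact hFlip u hu v hv
        _ = c₀' / c₀ * ‖u - v‖ := by ring
    have b2 : ‖(A u).symm ((A u) ((A v).symm (F v - h)) - (A v) ((A v).symm (F v - h)))‖
        ≤ c * c * ‖u - v‖ := by
      calc _ ≤ c * ‖u - v‖ * ‖(A v).symm (F v - h)‖ := h10 u hu v hv _
        _ ≤ c * ‖u - v‖ * c := by
            apply mul_le_mul_of_nonneg_left (hFh v hv) (by positivity)
        _ = c * c * ‖u - v‖ := by ring
    calc ‖(A u).symm (F u - h) - (A v).symm (F v - h)‖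
        ≤ ‖(A u).symm (F u - F v)‖
          + ‖(A u).symm ((A u) ((A v).symm (F v - h)) - (A v) ((A v).symm (F v - h)))‖ := by
          rw [hdecomp]; exact norm_sub_le _ _
      _ ≤ c₀' / c₀ * ‖u - v‖ + c * c * ‖u - v‖ := add_le_add b1 b2
      _ = (c₀' / c₀ + c * c) * ‖u - v‖ := by ring
  intro x hx
  exact ⟨_, s, self_mem_nhdsWithin, key⟩
end

section
/- Suppose u solves u' = −[F'(u)]⁻¹(F(u) − h) with u(0) = u₀, F is continuously differentiable, and g(t) := ‖F(u(t)) − h‖ is differentiable where nonzero. Then g·g' = −g², and consequently ‖F(u(t)) − h‖ ≤ ‖F(u₀) − h‖·e^{−t} for all t ≥ 0. -/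
/-- Along the DSM flow `u' = -(F' u)⁻¹ (F u - h)`, the function
`g t = ‖F (u t) - h‖` satisfies `g g' = -g²` (where differentiable, i.e. where
`g ≠ 0`), and consequently `g t ≤ g 0 · e^{-t}` for all `t ≥ 0`. -/
theorem stmt11
    {H H' : Type*} [NormedAddCommGroup H] [InnerProductSpace ℝ H]
    [NormedAddCommGroup H'] [InnerProductSpace ℝ H'] [CompleteSpace H']
    (F : H → H') (A : H → (H ≃L[ℝ] H')) (h : H')
    (u u' : ℝ → H) (u₀ : H) (g' : ℝ → ℝ)
    (hF : ContDiff ℝ 1 F)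
    (hA : ∀ t : ℝ, 0 ≤ t → (A (u t) : H →L[ℝ] H') = fderiv ℝ F (u t))
    (hu0 : u 0 = u₀)
    (hflow : ∀ t : ℝ, 0 ≤ t → HasDerivAt u (u' t) t ∧
      u' t = -((A (u t)).symm (F (u t) - h)))
    (hg' : ∀ t : ℝ, 0 ≤ t → F (u t) - h ≠ 0 →
      HasDerivAt (fun s => ‖F (u s) - h‖) (g' t) t) :
    (∀ t : ℝ, 0 ≤ t → F (u t) - h ≠ 0 →
        ‖F (u t) - h‖ * g' t = -‖F (u t) - h‖ ^ 2) ∧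
    (∀ t : ℝ, 0 ≤ t → ‖F (u t) - h‖ ≤ ‖F u₀ - h‖ * Real.exp (-t)) := by
  set v : ℝ → H' := fun s => F (u s) - h with hv_def
  have hv : ∀ t : ℝ, 0 ≤ t → HasDerivAt v (-(v t)) t := by
    intro t ht
    obtain ⟨hud, hue⟩ := hflow t ht
    have hFd := (hF.differentiable one_ne_zero (u t)).hasFDerivAt
    have hcomp : HasDerivAt (fun s => F (u s)) (fderiv ℝ F (u t) (u' t)) t :=
      hFd.comp_hasDerivAt t hud
    have hval : fderiv ℝ F (u t) (u' t) = -(v t) := by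
      rw [← hA t ht, hue]
      simp [hv_def]
    rw [hval] at hcomp
    exact hcomp.sub_const h
  have hsq : ∀ t : ℝ, 0 ≤ t →
      HasDerivAt (fun s => ‖v s‖ ^ 2) (-2 * ‖v t‖ ^ 2) t := by
    intro t ht
    have := (hv t ht).inner ℝ (hv t ht)
    have heq : (fun s => (inner ℝ (v s) (v s) : ℝ)) = fun s => ‖v s‖ ^ 2 := by
      funext s; rw [real_inner_self_eq_norm_sq]
    rw [heq] at this
    refine this.congr_deriv ?_
    rw [inner_neg_right, inner_neg_left, real_inner_self_eq_norm_sq]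
    ring
  constructor
  · intro t ht hne
    have h1 := (hg' t ht hne).pow 2
    have h2 := hsq t ht
    have := h1.unique h2
    simp at this
    nlinarith [this]
  · intro t ht
    -- w s = ‖v s‖² * exp (2 s) is constant on [0, t]
    have hw : ∀ s : ℝ, 0 ≤ s →
        HasDerivAt (fun r => ‖v r‖ ^ 2 * Real.exp (2 * r)) 0 s := by
      intro s hs
      have he : HasDerivAt (fun r : ℝ => Real.exp (2 * r))
          (Real.exp (2 * s) * 2) s := by
        simpa [Function.comp_def] using (Real.hasDerivAt_exp (2 * s)).comp s
          ((hasDerivAt_id s).const_mul 2)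
      have := (hsq s hs).mul he
      refine this.congr_deriv ?_
      ring
    have hconst : ∀ x ∈ Set.Icc (0:ℝ) t,
        (fun r => ‖v r‖ ^ 2 * Real.exp (2 * r)) x
          = (fun r => ‖v r‖ ^ 2 * Real.exp (2 * r)) 0 := by
      apply constant_of_has_deriv_right_zero
      · intro x hx
        exact ((hw x hx.1).continuousAt).continuousWithinAt
      · intro x hx
        exact (hw x hx.1).hasDerivWithinAt
    have hkey := hconst t ⟨ht, le_rfl⟩
    simp only at hkey
    have h0 : v 0 = F u₀ - h := by simp [hv_def, hu0]
    rw [h0] at hkey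
    have hexp : (0:ℝ) < Real.exp (-t) := Real.exp_pos _
    have hone : Real.exp (2 * (0:ℝ)) = 1 := by norm_num
    rw [hone, mul_one] at hkey
    have hE : Real.exp (2 * t) * (Real.exp (-t) * Real.exp (-t)) = 1 := by
      rw [← Real.exp_add, ← Real.exp_add]
      norm_num
      ring
    have hsq2 : ‖v t‖ ^ 2 = (‖F u₀ - h‖ * Real.exp (-t)) ^ 2 := by
      calc ‖v t‖ ^ 2
          = ‖v t‖ ^ 2 * (Real.exp (2 * t) * (Real.exp (-t) * Real.exp (-t))) := by
            rw [hE, mul_one]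
        _ = (‖v t‖ ^ 2 * Real.exp (2 * t)) * (Real.exp (-t) * Real.exp (-t)) := by
            ring
        _ = ‖F u₀ - h‖ ^ 2 * (Real.exp (-t) * Real.exp (-t)) := by rw [hkey]
        _ = (‖F u₀ - h‖ * Real.exp (-t)) ^ 2 := by ring
    nlinarith [hsq2, norm_nonneg (v t),
      mul_nonneg (norm_nonneg (F u₀ - h)) hexp.le]
end

section
/- Under the hypotheses of Theorem 1 (scale of Hilbert spaces, F : B_a(U,R) → H_{a+δ} with F(U) = f, isomorphism bounds (8), stability bounds (9)-(10), u₀ ∈ B_a(U,ρ), h ∈ B_{a+δ}(f,ρ), ρ ≤ R/(1 + c₀⁻¹(1+c₀'))), the Cauchy problem u' = −[F'(u)]⁻¹(F(u) − h), u(0) = u₀ has a unique global solution u(t) on [0,∞), the limit V = lim_{t→∞} u(t) exists in H_a, and F(V) = h. -/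
open Set Filter

/-- Global existence for an autonomous ODE with globally Lipschitz, bounded RHS. -/
theorem stmt19_global_ode {E : Type*} [NormedAddCommGroup E] [NormedSpace ℝ E]
    [CompleteSpace E] (G : E → E) (x₀ : E) (K : NNReal) (hK : LipschitzWith K G)
    (C : ℝ) (hC : ∀ x, ‖G x‖ ≤ C) :
    ∃ u : ℝ → E, u 0 = x₀ ∧ ∀ t, HasDerivAt u (G (u t)) t := by
  have hC0 : 0 ≤ C := (norm_nonneg _).trans (hC x₀)
  have hpl : ∀ n : ℕ, IsPicardLindelof (fun _ x => G x) (tmin := -(n + 1 : ℝ)) (tmax := (n + 1 : ℝ))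
      ⟨0, by constructor <;> [linarith [Nat.cast_nonneg (α := ℝ) n]; positivity]⟩ x₀
      (C.toNNReal * (n + 1)) 0 C.toNNReal K := by
    intro n
    refine ⟨fun t _ => hK.lipschitzOnWith, fun x _ => continuousOn_const,
      fun t _ x _ => (hC x).trans (Real.le_coe_toNNReal C), ?_⟩
    · have : max ((n + 1 : ℝ) - 0) (0 - -(n + 1)) = (n + 1 : ℝ) := by
        rw [sub_zero, zero_sub, neg_neg, max_self]
      simp only [this, NNReal.coe_mul, NNReal.coe_zero, sub_zero]
      push_cast
      rw [zero_sub, neg_neg, max_self]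
  choose fn hfn0 hfn using fun n : ℕ =>
    (hpl n).exists_eq_forall_mem_Icc_hasDerivWithinAt₀
  have hmem : ∀ (n : ℕ) (t : ℝ), t ∈ Ioo (-(n + 1 : ℝ)) ((n + 1 : ℝ)) →
      HasDerivAt (fn n) (G (fn n t)) t := fun n t ht =>
    (hfn n t (Ioo_subset_Icc_self ht)).hasDerivAt (Icc_mem_nhds ht.1 ht.2)
  -- consistency
  have hcons : ∀ m n : ℕ, m ≤ n → ∀ t ∈ Ioo (-(m + 1 : ℝ)) ((m + 1 : ℝ)), fn m t = fn n t := by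
    intro m n hmn t ht
    have hsub : Ioo (-(m + 1 : ℝ)) ((m + 1 : ℝ)) ⊆ Ioo (-(n + 1 : ℝ)) ((n + 1 : ℝ)) := by
      apply Ioo_subset_Ioo <;> · have : (m : ℝ) ≤ n := Nat.cast_le.2 hmn; linarith
    refine ODE_solution_unique_of_mem_Ioo (v := fun _ x => G x) (s := fun _ => univ)
      (K := K) (fun t _ => hK.lipschitzOnWith) (t₀ := 0) ?_ ?_ ?_ ?_ ht
    · constructor <;> [linarith [Nat.cast_nonneg (α := ℝ) m]; positivity]
    · exact fun s hs => ⟨hmem m s hs, trivial⟩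
    · exact fun s hs => ⟨hmem n s (hsub hs), trivial⟩
    · rw [hfn0 m, hfn0 n]
  set u : ℝ → E := fun t => fn ⌈|t|⌉₊ t with hu
  have hloc : ∀ n : ℕ, ∀ s ∈ Ioo (-(n + 1 : ℝ)) ((n + 1 : ℝ)), u s = fn n s := by
    intro n s hs
    have hsm : s ∈ Ioo (-(⌈|s|⌉₊ + 1 : ℝ)) ((⌈|s|⌉₊ + 1 : ℝ)) := by
      have h1 : |s| ≤ (⌈|s|⌉₊ : ℝ) := Nat.le_ceil _
      have := abs_le.1 h1
      constructor <;> [linarith [this.1]; linarith [this.2]]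
    rcases le_total (⌈|s|⌉₊ : ℕ) n with hmn | hmn
    · exact hcons _ n hmn s hsm
    · exact (hcons n _ hmn s hs).symm
  refine ⟨u, ?_, ?_⟩
  · have : u 0 = fn 0 0 := by
      simp [hu]
    rw [this, hfn0 0]
  · intro t
    set n := ⌈|t|⌉₊ with hn
    have htm : t ∈ Ioo (-(n + 1 : ℝ)) ((n + 1 : ℝ)) := by
      have h1 : |t| ≤ (n : ℝ) := Nat.le_ceil _
      have := abs_le.1 h1
      constructor <;> [linarith [this.1]; linarith [this.2]]
    have hev : u =ᶠ[nhds t] fn n :=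
      eventuallyEq_of_mem (Ioo_mem_nhds htm.1 htm.2) (fun s hs => hloc n s hs)
    have hut : u t = fn n t := hloc n t htm
    rw [hut]
    exact (hmem n t htm).congr_of_eventuallyEq hev

open Set

section Radial
variable {E : Type*} [NormedAddCommGroup E] [NormedSpace ℝ E] {R : ℝ}

theorem stmt19_radial_fix (z : E) (hz : ‖z‖ ≤ R) : min 1 (R / ‖z‖) • z = z := by
  rcases eq_or_ne z 0 with rfl | hz0
  · simp
  · have hn : 0 < ‖z‖ := norm_pos_iff.2 hz0
    have : (1 : ℝ) ≤ R / ‖z‖ := (one_le_div hn).2 hz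
    rw [min_eq_left this, one_smul]

theorem stmt19_radial_norm (hR : 0 ≤ R) (z : E) : ‖min 1 (R / ‖z‖) • z‖ ≤ R := by
  rcases eq_or_ne z 0 with rfl | hz0
  · simpa using hR
  · have hn : 0 < ‖z‖ := norm_pos_iff.2 hz0
    rw [norm_smul, Real.norm_eq_abs, abs_of_nonneg (le_min zero_le_one (by positivity))]
    calc min 1 (R / ‖z‖) * ‖z‖ ≤ (R / ‖z‖) * ‖z‖ := by
          gcongr; exact min_le_right _ _
      _ = R := div_mul_cancel₀ _ hn.ne'

theorem stmt19_radial_lip_aux (hR : 0 ≤ R) (z w : E) (hzw : ‖w‖ ≤ ‖z‖) :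
    ‖min 1 (R / ‖z‖) • z - min 1 (R / ‖w‖) • w‖ ≤ 2 * ‖z - w‖ := by
  rcases le_or_gt ‖z‖ R with hzR | hzR
  · rw [stmt19_radial_fix z hzR, stmt19_radial_fix w (hzw.trans hzR)]
    nlinarith [norm_nonneg (z - w)]
  · have hz0 : 0 < ‖z‖ := lt_of_le_of_lt hR hzR
    have hmz : min 1 (R / ‖z‖) = R / ‖z‖ :=
      min_eq_right (le_of_lt ((div_lt_one hz0).2 hzR))
    rcases le_or_gt ‖w‖ R with hwR | hwR
    · -- case ‖w‖ ≤ R < ‖z‖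
      rw [hmz, stmt19_radial_fix w hwR]
      have h1 : ‖(R / ‖z‖) • z - w‖ ≤ ‖(R / ‖z‖) • z - z‖ + ‖z - w‖ := by
        calc ‖(R / ‖z‖) • z - w‖ = ‖((R / ‖z‖) • z - z) + (z - w)‖ := by abel_nf
          _ ≤ _ := norm_add_le _ _
      have h2 : ‖(R / ‖z‖) • z - z‖ = ‖z‖ - R := by
        have : (R / ‖z‖) • z - z = (R / ‖z‖ - 1) • z := by
          rw [sub_smul, one_smul]
        rw [this, norm_smul, Real.norm_eq_abs,
          abs_of_nonpos (by rw [sub_nonpos]; exact le_of_lt ((div_lt_one hz0).2 hzR))]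
        field_simp; ring
      have h3 : ‖z‖ - R ≤ ‖z‖ - ‖w‖ := by linarith
      have h4 : ‖z‖ - ‖w‖ ≤ ‖z - w‖ := norm_sub_norm_le _ _
      linarith
    · -- case R < ‖w‖ ≤ ‖z‖
      have hw0 : 0 < ‖w‖ := lt_of_le_of_lt hR hwR
      have hmw : min 1 (R / ‖w‖) = R / ‖w‖ :=
        min_eq_right (le_of_lt ((div_lt_one hw0).2 hwR))
      rw [hmz, hmw]
      have h1 : ‖(R / ‖z‖) • z - (R / ‖w‖) • w‖ ≤
          ‖(R / ‖z‖) • z - (R / ‖z‖) • w‖ + ‖(R / ‖z‖) • w - (R / ‖w‖) • w‖ := by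
        calc ‖(R / ‖z‖) • z - (R / ‖w‖) • w‖
            = ‖((R / ‖z‖) • z - (R / ‖z‖) • w) + ((R / ‖z‖) • w - (R / ‖w‖) • w)‖ := by abel_nf
          _ ≤ _ := norm_add_le _ _
      have h2 : ‖(R / ‖z‖) • z - (R / ‖z‖) • w‖ ≤ ‖z - w‖ := by
        rw [← smul_sub, norm_smul, Real.norm_eq_abs, abs_of_nonneg (by positivity)]
        calc (R / ‖z‖) * ‖z - w‖ ≤ 1 * ‖z - w‖ := by
              gcongr; exact le_of_lt ((div_lt_one hz0).2 hzR)
          _ = ‖z - w‖ := one_mul _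
      have h3 : ‖(R / ‖z‖) • w - (R / ‖w‖) • w‖ ≤ ‖z - w‖ := by
        rw [← sub_smul, norm_smul, Real.norm_eq_abs]
        have he : R / ‖z‖ - R / ‖w‖ = -(R * (‖z‖ - ‖w‖) / (‖z‖ * ‖w‖)) := by
          field_simp; ring
        rw [he, abs_neg,
          abs_of_nonneg (div_nonneg (mul_nonneg hR (by linarith)) (by positivity))]
        have : R * (‖z‖ - ‖w‖) / (‖z‖ * ‖w‖) * ‖w‖ = (R / ‖z‖) * (‖z‖ - ‖w‖) := by
          field_simp
        rw [this]
        calc (R / ‖z‖) * (‖z‖ - ‖w‖) ≤ 1 * (‖z‖ - ‖w‖) :=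
              mul_le_mul_of_nonneg_right (le_of_lt ((div_lt_one hz0).2 hzR)) (by linarith)
          _ = ‖z‖ - ‖w‖ := one_mul _
          _ ≤ ‖z - w‖ := norm_sub_norm_le _ _
      linarith

theorem stmt19_radial_lip (hR : 0 ≤ R) (z w : E) :
    ‖min 1 (R / ‖z‖) • z - min 1 (R / ‖w‖) • w‖ ≤ 2 * ‖z - w‖ := by
  rcases le_total ‖w‖ ‖z‖ with hzw | hzw
  · exact stmt19_radial_lip_aux hR z w hzw
  · rw [norm_sub_rev, norm_sub_rev z w]
    exact stmt19_radial_lip_aux hR w z hzw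

end Radial


open Real in
set_option maxHeartbeats 4000000 in
/-- Theorem 1 of the paper (DSM hard implicit function theorem): under the
scale-of-Hilbert-spaces assumptions (7)-(10) and the smallness condition
`ρ ≤ R / (1 + c₀⁻¹(1 + c₀'))`, the Cauchy problem
`u' = -(F' u)⁻¹ (F u - h)`, `u 0 = u₀` has a unique global solution staying in
`B_a(U, R)`, the limit `V = lim_{t→∞} u t` exists in `H_a`, and `F V = h`. -/
theorem stmt19
    {Ha Hb : Type*} [NormedAddCommGroup Ha] [InnerProductSpace ℝ Ha]
    [CompleteSpace Ha] [NormedAddCommGroup Hb] [InnerProductSpace ℝ Hb]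
    (J : Ha →L[ℝ] Hb) (hJinj : Function.Injective J)
    (hJ : ∀ x : Ha, ‖J x‖ ≤ ‖x‖)
    (F : Ha → Hb) (A : Ha → (Ha ≃L[ℝ] Hb))
    (U u₀ : Ha) (f h : Hb) (R ρ c₀ c₀' c : ℝ)
    (hR : 0 < R) (hc₀ : 0 < c₀) (hc₀' : 0 < c₀') (hc : 0 < c) (hρpos : 0 < ρ)
    (hFU : F U = f)
    (hFcont : ContinuousOn F (Metric.closedBall U R))
    (hderiv : ∀ u ∈ Metric.closedBall U R,
      HasFDerivWithinAt F ((A u : Ha →L[ℝ] Hb)) (Metric.closedBall U R) u)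
    (h8 : ∀ u ∈ Metric.closedBall U R, ∀ v : Ha,
      c₀ * ‖v‖ ≤ ‖(A u) v‖ ∧ ‖(A u) v‖ ≤ c₀' * ‖v‖)
    (h9 : ∀ v ∈ Metric.closedBall U R, ∀ w ∈ Metric.closedBall U R, ∀ q : Ha,
      ‖(A v).symm ((A w) q)‖ ≤ c * ‖q‖)
    (h10 : ∀ u ∈ Metric.closedBall U R, ∀ v ∈ Metric.closedBall U R, ∀ q : Ha,
      ‖(A u).symm ((A u) q - (A v) q)‖ ≤ c * ‖u - v‖ * ‖q‖)
    (hu₀ : ‖u₀ - U‖ ≤ ρ) (hh : ‖h - f‖ ≤ ρ)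
    (hρ : ρ ≤ R / (1 + c₀⁻¹ * (1 + c₀'))) :
    ∃ u u' : ℝ → Ha,
      u 0 = u₀ ∧
      (∀ t : ℝ, 0 ≤ t → u t ∈ Metric.closedBall U R) ∧
      (∀ t : ℝ, 0 ≤ t → HasDerivAt u (u' t) t ∧
        u' t = -((A (u t)).symm (F (u t) - h))) ∧
      (∀ v v' : ℝ → Ha,
        v 0 = u₀ →
        (∀ t : ℝ, 0 ≤ t → v t ∈ Metric.closedBall U R) →
        (∀ t : ℝ, 0 ≤ t → HasDerivAt v (v' t) t ∧
          v' t = -((A (v t)).symm (F (v t) - h))) →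
        ∀ t : ℝ, 0 ≤ t → v t = u t) ∧
      ∃ V : Ha, Filter.Tendsto u Filter.atTop (nhds V) ∧ F V = h := by
  classical
  have hc₀i : (0:ℝ) < c₀⁻¹ := inv_pos.2 hc₀
  have hD : (0:ℝ) < c₀⁻¹ * (1 + c₀') := by positivity
  have hρR : ρ * (1 + c₀⁻¹ * (1 + c₀')) ≤ R := by
    rw [le_div_iff₀ (by linarith)] at hρ; exact hρ
  have hρltR : ρ < R := by nlinarith
  have hmemU : U ∈ Metric.closedBall U R := Metric.mem_closedBall_self hR.le
  have hmemu₀ : u₀ ∈ Metric.closedBall U R := by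
    rw [Metric.mem_closedBall, dist_eq_norm]; linarith
  -- basic bounds
  have hAinv : ∀ x ∈ Metric.closedBall U R, ∀ y : Hb, ‖(A x).symm y‖ ≤ c₀⁻¹ * ‖y‖ := by
    intro x hx y
    have h1 := (h8 x hx ((A x).symm y)).1
    rw [(A x).apply_symm_apply] at h1
    rw [inv_mul_eq_div, le_div_iff₀ hc₀]
    linarith [h1]
  have hFlip : ∀ x ∈ Metric.closedBall U R, ∀ y ∈ Metric.closedBall U R,
      ‖F x - F y‖ ≤ c₀' * ‖x - y‖ := by
    intro x hx y hy
    exact (convex_closedBall U R).norm_image_sub_le_of_norm_hasFDerivWithin_le hderiv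
      (fun z hz => ContinuousLinearMap.opNorm_le_bound _ hc₀'.le (fun v => (h8 z hz v).2)) hy hx
  set M : ℝ := c₀' * R + ρ with hM
  have hMpos : 0 < M := by positivity
  have hFh : ∀ x ∈ Metric.closedBall U R, ‖F x - h‖ ≤ M := by
    intro x hx
    have h1 : ‖F x - h‖ ≤ ‖F x - F U‖ + ‖F U - h‖ := by
      calc ‖F x - h‖ = ‖(F x - F U) + (F U - h)‖ := by abel_nf
        _ ≤ _ := norm_add_le _ _
    have h2 : ‖F x - F U‖ ≤ c₀' * R := by
      have := hFlip x hx U hmemU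
      have hxU : ‖x - U‖ ≤ R := by rw [Metric.mem_closedBall, dist_eq_norm] at hx; exact hx
      nlinarith
    have h3 : ‖F U - h‖ ≤ ρ := by rw [hFU, ← norm_neg]; simpa using hh
    linarith
  -- projection
  set P : Ha → Ha := fun x => U + min 1 (R / ‖x - U‖) • (x - U) with hP
  have hPfix : ∀ x ∈ Metric.closedBall U R, P x = x := by
    intro x hx
    have hxU : ‖x - U‖ ≤ R := by rw [Metric.mem_closedBall, dist_eq_norm] at hx; exact hx
    simp only [hP, stmt19_radial_fix (x - U) hxU]; abel
  have hPmem : ∀ x, P x ∈ Metric.closedBall U R := by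
    intro x
    rw [Metric.mem_closedBall, dist_eq_norm]
    have hPx : P x - U = min 1 (R / ‖x - U‖) • (x - U) := by
      simp only [hP]; abel
    rw [hPx]
    exact stmt19_radial_norm hR.le (x - U)
  have hPlip : ∀ x y, ‖P x - P y‖ ≤ 2 * ‖x - y‖ := by
    intro x y
    have h1 : P x - P y = min 1 (R / ‖x - U‖) • (x - U) - min 1 (R / ‖y - U‖) • (y - U) := by
      simp only [hP]; abel
    have h2 : x - U - (y - U) = x - y := by abel
    rw [h1]
    calc ‖_ - _‖ ≤ 2 * ‖(x - U) - (y - U)‖ := stmt19_radial_lip hR.le _ _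
      _ = 2 * ‖x - y‖ := by rw [h2]
  -- the vector field
  set G : Ha → Ha := fun x => -((A x).symm (F x - h)) with hG
  set K₀ : ℝ := c₀⁻¹ * c₀' + c * c₀⁻¹ * M with hK₀
  have hK₀pos : 0 < K₀ := by positivity
  have hGlip : ∀ x ∈ Metric.closedBall U R, ∀ y ∈ Metric.closedBall U R,
      ‖G x - G y‖ ≤ K₀ * ‖x - y‖ := by
    intro x hx y hy
    have e0 : G x - G y = (A y).symm (F y - h) - (A x).symm (F x - h) := by
      simp only [hG]; abel
    have e1 : (A y).symm (F y - h) - (A x).symm (F x - h)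
        = (A y).symm (F y - F x) + ((A y).symm (F x - h) - (A x).symm (F x - h)) := by
      have h1 : (A y).symm (F y - F x) = (A y).symm (F y - h) - (A y).symm (F x - h) := by
        rw [← map_sub]
        congr 1
        abel
      rw [h1]
      abel
    set q : Ha := (A y).symm (F x - h) with hq
    have e2 : (A y).symm (F x - h) - (A x).symm (F x - h)
        = (A x).symm ((A x) q - (A y) q) := by
      have h1 : (A y) q = F x - h := (A y).apply_symm_apply _
      conv_rhs => rw [map_sub, ContinuousLinearEquiv.symm_apply_apply, h1]
    have b1 : ‖(A y).symm (F y - F x)‖ ≤ c₀⁻¹ * c₀' * ‖x - y‖ := by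
      have h1 := hAinv y hy (F y - F x)
      have h2 := hFlip y hy x hx
      have h3 : ‖x - y‖ = ‖y - x‖ := norm_sub_rev _ _
      calc ‖(A y).symm (F y - F x)‖ ≤ c₀⁻¹ * ‖F y - F x‖ := h1
        _ ≤ c₀⁻¹ * (c₀' * ‖y - x‖) := by gcongr
        _ = c₀⁻¹ * c₀' * ‖x - y‖ := by rw [h3]; ring
    have b2 : ‖(A x).symm ((A x) q - (A y) q)‖ ≤ c * c₀⁻¹ * M * ‖x - y‖ := by
      have h1 := h10 x hx y hy q
      have h2 : ‖q‖ ≤ c₀⁻¹ * M := by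
        have := hAinv y hy (F x - h)
        have := hFh x hx
        calc ‖q‖ ≤ c₀⁻¹ * ‖F x - h‖ := hAinv y hy (F x - h)
          _ ≤ c₀⁻¹ * M := by gcongr
      calc ‖(A x).symm ((A x) q - (A y) q)‖ ≤ c * ‖x - y‖ * ‖q‖ := h1
        _ ≤ c * ‖x - y‖ * (c₀⁻¹ * M) := by gcongr
        _ = c * c₀⁻¹ * M * ‖x - y‖ := by ring
    calc ‖G x - G y‖ = ‖(A y).symm (F y - F x) + ((A y).symm (F x - h) - (A x).symm (F x - h))‖ := by
          rw [e0, e1]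
      _ ≤ ‖(A y).symm (F y - F x)‖ + ‖(A y).symm (F x - h) - (A x).symm (F x - h)‖ :=
          norm_add_le _ _
      _ ≤ c₀⁻¹ * c₀' * ‖x - y‖ + c * c₀⁻¹ * M * ‖x - y‖ := by
          rw [e2]; exact add_le_add b1 b2
      _ = K₀ * ‖x - y‖ := by rw [hK₀]; ring
  have hGnorm : ∀ x ∈ Metric.closedBall U R, ‖G x‖ ≤ c₀⁻¹ * M := by
    intro x hx
    have := hAinv x hx (F x - h)
    have h2 := hFh x hx
    simp only [hG, norm_neg]
    nlinarith
  set Gt : Ha → Ha := fun x => G (P x) with hGt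
  set K : NNReal := Real.toNNReal (2 * K₀) with hKdef
  have hKlip : LipschitzWith K Gt := by
    apply LipschitzWith.of_dist_le_mul
    intro x y
    rw [dist_eq_norm, dist_eq_norm, hKdef, Real.coe_toNNReal _ (by positivity)]
    calc ‖Gt x - Gt y‖ ≤ K₀ * ‖P x - P y‖ := hGlip _ (hPmem x) _ (hPmem y)
      _ ≤ K₀ * (2 * ‖x - y‖) := by gcongr; exact hPlip x y
      _ = 2 * K₀ * ‖x - y‖ := by ring
  have hGtnorm : ∀ x, ‖Gt x‖ ≤ c₀⁻¹ * M := fun x => hGnorm _ (hPmem x)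
  obtain ⟨u, hu0, hud⟩ := stmt19_global_ode Gt u₀ K hKlip (c₀⁻¹ * M) hGtnorm
  have hcu : Continuous u := by
    rw [continuous_iff_continuousAt]; exact fun t => (hud t).continuousAt
  set g₀ : ℝ := ‖F u₀ - h‖ with hg₀def
  have hg₀0 : 0 ≤ g₀ := norm_nonneg _
  have hg₀le : g₀ ≤ (1 + c₀') * ρ := by
    have h1 : ‖F u₀ - h‖ ≤ ‖F u₀ - F U‖ + ‖F U - h‖ := by
      calc ‖F u₀ - h‖ = ‖(F u₀ - F U) + (F U - h)‖ := by abel_nf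
        _ ≤ _ := norm_add_le _ _
    have h2 := hFlip u₀ hmemu₀ U hmemU
    have h3 : ‖F U - h‖ ≤ ρ := by rw [hFU, ← norm_neg]; simpa using hh
    nlinarith
  have hrle : ∀ t : ℝ, ρ + c₀⁻¹ * g₀ * (1 - Real.exp (-t)) ≤ R := by
    intro t
    have h1 : c₀⁻¹ * g₀ * (1 - Real.exp (-t)) ≤ c₀⁻¹ * g₀ * 1 :=
      mul_le_mul_of_nonneg_left (by linarith [(Real.exp_pos (-t)).le]) (mul_nonneg hc₀i.le hg₀0)
    have h2 : c₀⁻¹ * g₀ ≤ c₀⁻¹ * ((1 + c₀') * ρ) :=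
      mul_le_mul_of_nonneg_left hg₀le hc₀i.le
    have h3 : c₀⁻¹ * ((1 + c₀') * ρ) = ρ * (c₀⁻¹ * (1 + c₀')) := by ring
    have h4 : ρ + ρ * (c₀⁻¹ * (1 + c₀')) ≤ R := by nlinarith [hρR]
    linarith
  -- the key decay estimates, conditional on staying in the ball
  have hkey : ∀ b : ℝ, 0 ≤ b → (∀ s ∈ Set.Icc (0:ℝ) b, u s ∈ Metric.closedBall U R) →
      (∀ t ∈ Set.Icc (0:ℝ) b, F (u t) - h = Real.exp (-t) • (F u₀ - h)) ∧
      (∀ s ∈ Set.Icc (0:ℝ) b, ∀ t ∈ Set.Icc s b,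
        ‖u t - u s‖ ≤ c₀⁻¹ * g₀ * (Real.exp (-s) - Real.exp (-t))) := by
    intro b hb hmem
    have hG' : ∀ s ∈ Set.Icc (0:ℝ) b, Gt (u s) = -((A (u s)).symm (F (u s) - h)) := by
      intro s hs
      simp only [hGt, hG, hPfix _ (hmem s hs)]
    have hFu : ∀ s ∈ Set.Icc (0:ℝ) b,
        HasDerivWithinAt (fun σ => F (u σ)) (-(F (u s) - h)) (Set.Icc 0 b) s := by
      intro s hs
      have h1 := (hderiv (u s) (hmem s hs)).comp_hasDerivWithinAt s
        ((hud s).hasDerivWithinAt) (fun σ hσ => hmem σ hσ)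
      have h2 : (A (u s) : Ha →L[ℝ] Hb) (Gt (u s)) = -(F (u s) - h) := by
        rw [hG' s hs]
        have h3 : (A (u s) : Ha →L[ℝ] Hb) (-((A (u s)).symm (F (u s) - h)))
            = (A (u s)) (-((A (u s)).symm (F (u s) - h))) := rfl
        rw [h3, map_neg, (A (u s)).apply_symm_apply]
      rw [h2] at h1
      exact h1
    -- exponential conservation law
    have hcontFu : ContinuousOn (fun σ => F (u σ)) (Set.Icc (0:ℝ) b) :=
      hFcont.comp hcu.continuousOn hmem
    have hwcont : ContinuousOn (fun σ => Real.exp σ • (F (u σ) - h) - (F u₀ - h))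
        (Set.Icc (0:ℝ) b) :=
      ((Real.continuous_exp.continuousOn.smul (hcontFu.sub continuousOn_const)).sub
        continuousOn_const)
    have hwderiv : ∀ x ∈ Set.Ico (0:ℝ) b,
        HasDerivWithinAt (fun σ => Real.exp σ • (F (u σ) - h) - (F u₀ - h))
          ((fun _ => (0:Hb)) x) (Set.Ici x) x := by
      intro x hx
      have hx' : x ∈ Set.Icc (0:ℝ) b := Set.Ico_subset_Icc_self hx
      have hde : HasDerivWithinAt Real.exp (Real.exp x) (Set.Icc (0:ℝ) b) x :=
        (Real.hasDerivAt_exp x).hasDerivWithinAt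
      have hfs : HasDerivWithinAt (fun σ => F (u σ) - h) (-(F (u x) - h)) (Set.Icc (0:ℝ) b) x :=
        (hFu x hx').sub_const h
      have hsm := hde.smul hfs
      have hzero : Real.exp x • (-(F (u x) - h)) + Real.exp x • (F (u x) - h) = (0:Hb) := by
        rw [smul_neg]; exact neg_add_cancel _
      rw [hzero] at hsm
      exact (hsm.sub_const (F u₀ - h)).mono_of_mem_nhdsWithin (Icc_mem_nhdsGE_of_mem hx)
    have hwa : ‖Real.exp (0:ℝ) • (F (u 0) - h) - (F u₀ - h)‖ ≤ (fun _ : ℝ => (0:ℝ)) 0 := by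
      simp [hu0]
    have hwB : ∀ x : ℝ, HasDerivAt (fun _ : ℝ => (0:ℝ)) ((fun _ : ℝ => (0:ℝ)) x) x :=
      fun x => hasDerivAt_const x 0
    have hwbound : ∀ x ∈ Set.Ico (0:ℝ) b, ‖(fun _ => (0:Hb)) x‖ ≤ (fun _ : ℝ => (0:ℝ)) x := by
      intro x _; simp
    have hwzero := image_norm_le_of_norm_deriv_right_le_deriv_boundary
      hwcont hwderiv hwa hwB hwbound
    have hconsF : ∀ t ∈ Set.Icc (0:ℝ) b, F (u t) - h = Real.exp (-t) • (F u₀ - h) := by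
      intro t ht
      have h2 : Real.exp t • (F (u t) - h) - (F u₀ - h) = 0 :=
        norm_le_zero_iff.1 (hwzero ht)
      have h1 : Real.exp t • (F (u t) - h) = F u₀ - h := sub_eq_zero.1 h2
      calc F (u t) - h = (Real.exp (-t) * Real.exp t) • (F (u t) - h) := by
            rw [← Real.exp_add]; simp
        _ = Real.exp (-t) • (Real.exp t • (F (u t) - h)) := by rw [mul_smul]
        _ = Real.exp (-t) • (F u₀ - h) := by rw [h1]
    refine ⟨hconsF, ?_⟩
    intro s hs t ht
    have hkcont : ContinuousOn (fun σ => u σ - u s) (Set.Icc s b) :=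
      hcu.continuousOn.sub continuousOn_const
    have hkderiv : ∀ x ∈ Set.Ico s b,
        HasDerivWithinAt (fun σ => u σ - u s) ((fun σ => Gt (u σ)) x) (Set.Ici x) x :=
      fun x _ => ((hud x).hasDerivWithinAt).sub_const (u s)
    have hka : ‖u s - u s‖ ≤ c₀⁻¹ * g₀ * (Real.exp (-s) - Real.exp (-s)) := by simp
    have hkB : ∀ x : ℝ, HasDerivAt (fun σ => c₀⁻¹ * g₀ * (Real.exp (-s) - Real.exp (-σ)))
        (c₀⁻¹ * g₀ * Real.exp (-x)) x := by
      intro x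
      have hexp : HasDerivAt (fun σ : ℝ => Real.exp (-σ)) (-Real.exp (-x)) x := by
        simpa [Function.comp_def] using (Real.hasDerivAt_exp (-x)).comp x (hasDerivAt_neg x)
      have h1 := ((hasDerivAt_const x (Real.exp (-s))).sub hexp).const_mul (c₀⁻¹ * g₀)
      exact h1.congr_deriv (by ring)
    have hkbound : ∀ x ∈ Set.Ico s b, ‖(fun σ => Gt (u σ)) x‖ ≤ c₀⁻¹ * g₀ * Real.exp (-x) := by
      intro x hx
      have hx' : x ∈ Set.Icc (0:ℝ) b := ⟨hs.1.trans hx.1, hx.2.le⟩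
      calc ‖Gt (u x)‖ = ‖(A (u x)).symm (F (u x) - h)‖ := by rw [hG' x hx', norm_neg]
        _ ≤ c₀⁻¹ * ‖F (u x) - h‖ := hAinv _ (hmem x hx') _
        _ = c₀⁻¹ * (Real.exp (-x) * g₀) := by
            rw [hconsF x hx', norm_smul, Real.norm_eq_abs, abs_of_pos (Real.exp_pos _)]
        _ = c₀⁻¹ * g₀ * Real.exp (-x) := by ring
    have hk := image_norm_le_of_norm_deriv_right_le_deriv_boundary
      hkcont hkderiv hka hkB hkbound
    exact hk ht
  -- a priori estimate
  have hprior : ∀ t : ℝ, 0 ≤ t → ‖u t - U‖ ≤ ρ + c₀⁻¹ * g₀ * (1 - Real.exp (-t)) := by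
    by_contra hcon
    push_neg at hcon
    obtain ⟨t₁, ht₁0, ht₁⟩ := hcon
    set Bset : Set ℝ := {t : ℝ | 0 ≤ t ∧ ρ + c₀⁻¹ * g₀ * (1 - Real.exp (-t)) < ‖u t - U‖}
      with hBset
    have hne : Bset.Nonempty := ⟨t₁, ht₁0, ht₁⟩
    have hbdd : BddBelow Bset := ⟨0, fun t ht => ht.1⟩
    set τ : ℝ := sInf Bset with hτ
    have hτ0 : 0 ≤ τ := le_csInf hne (fun t ht => ht.1)
    have hlt : ∀ s, 0 ≤ s → s < τ → ‖u s - U‖ ≤ ρ + c₀⁻¹ * g₀ * (1 - Real.exp (-s)) := by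
      intro s hs0 hsτ
      by_contra hcon2
      push_neg at hcon2
      exact absurd (csInf_le hbdd ⟨hs0, hcon2⟩) (not_le.2 hsτ)
    have hφcont : Continuous fun s => ‖u s - U‖ - (ρ + c₀⁻¹ * g₀ * (1 - Real.exp (-s))) :=
      ((hcu.sub continuous_const).norm).sub
        (continuous_const.add (continuous_const.mul
          (continuous_const.sub (Real.continuous_exp.comp continuous_neg))))
    have hτle : ‖u τ - U‖ ≤ ρ + c₀⁻¹ * g₀ * (1 - Real.exp (-τ)) := by
      rcases eq_or_lt_of_le hτ0 with heq | hpos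
      · rw [← heq, hu0]
        simpa using hu₀
      · have h1 : Filter.Tendsto (fun s => ‖u s - U‖ - (ρ + c₀⁻¹ * g₀ * (1 - Real.exp (-s))))
            (nhdsWithin τ (Set.Iio τ))
            (nhds (‖u τ - U‖ - (ρ + c₀⁻¹ * g₀ * (1 - Real.exp (-τ))))) :=
          (hφcont.tendsto τ).mono_left nhdsWithin_le_nhds
        have h2 : ∀ᶠ s in nhdsWithin τ (Set.Iio τ),
            ‖u s - U‖ - (ρ + c₀⁻¹ * g₀ * (1 - Real.exp (-s))) ≤ 0 := by
          filter_upwards [Filter.eventually_mem_set.2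
            (Ioo_mem_nhdsLT_of_mem ⟨hpos, le_rfl⟩)] with s hsm
          have := hlt s hsm.1.le hsm.2
          linarith
        have := le_of_tendsto h1 h2
        linarith
    have hrτR : ρ + c₀⁻¹ * g₀ * (1 - Real.exp (-τ)) < R := by
      rcases eq_or_lt_of_le hg₀0 with heq | hg₀pos
      · rw [← heq]
        simpa using hρltR
      · have hexp : 0 < Real.exp (-τ) := Real.exp_pos _
        have h1 : c₀⁻¹ * g₀ * (1 - Real.exp (-τ)) < c₀⁻¹ * g₀ := by nlinarith [mul_pos (mul_pos hc₀i hg₀pos) hexp]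
        have h2 : c₀⁻¹ * g₀ ≤ c₀⁻¹ * ((1 + c₀') * ρ) :=
          mul_le_mul_of_nonneg_left hg₀le hc₀i.le
        have h4 : ρ + ρ * (c₀⁻¹ * (1 + c₀')) ≤ R := by nlinarith [hρR]
        nlinarith
    have huτR : ‖u τ - U‖ < R := lt_of_le_of_lt hτle hrτR
    have hopen : {s : ℝ | ‖u s - U‖ < R} ∈ nhds τ :=
      (isOpen_lt ((hcu.sub continuous_const).norm) continuous_const).mem_nhds huτR
    obtain ⟨ε, hε, hεsub⟩ := Metric.mem_nhds_iff.1 hopen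
    obtain ⟨b, hbB, hbε⟩ := exists_lt_of_csInf_lt hne (show sInf Bset < τ + ε / 2 by
      rw [← hτ]; linarith)
    have hbτ : τ ≤ b := csInf_le hbdd hbB
    have hb0 : 0 ≤ b := hbB.1
    have hmemb : ∀ s ∈ Set.Icc (0:ℝ) b, u s ∈ Metric.closedBall U R := by
      intro s hsm
      rw [Metric.mem_closedBall, dist_eq_norm]
      rcases lt_or_ge s τ with hcase | hcase
      · exact (hlt s hsm.1 hcase).trans (hrle s)
      · have : s ∈ Metric.ball τ ε := by
          rw [Metric.mem_ball, Real.dist_eq, abs_sub_lt_iff]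
          constructor <;> [linarith [hsm.2]; linarith]
        exact (hεsub this).le
    have hest := (hkey b hb0 hmemb).2 0 ⟨le_rfl, hb0⟩ b ⟨hb0, le_rfl⟩
    rw [hu0] at hest
    have h5 : ‖u b - U‖ ≤ ‖u b - u₀‖ + ‖u₀ - U‖ := by
      calc ‖u b - U‖ = ‖(u b - u₀) + (u₀ - U)‖ := by abel_nf
        _ ≤ _ := norm_add_le _ _
    have h6 : Real.exp (-(0:ℝ)) = 1 := by simp
    rw [h6] at hest
    have := hbB.2
    linarith
  have hball : ∀ t : ℝ, 0 ≤ t → u t ∈ Metric.closedBall U R := by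
    intro t ht
    rw [Metric.mem_closedBall, dist_eq_norm]
    exact (hprior t ht).trans (hrle t)
  have hFd : ∀ t : ℝ, 0 ≤ t → F (u t) - h = Real.exp (-t) • (F u₀ - h) := fun t ht =>
    (hkey t ht (fun s hs => hball s hs.1)).1 t ⟨ht, le_rfl⟩
  have hpair : ∀ s t : ℝ, 0 ≤ s → s ≤ t →
      ‖u t - u s‖ ≤ c₀⁻¹ * g₀ * (Real.exp (-s) - Real.exp (-t)) := fun s t hs hst =>
    (hkey t (hs.trans hst) (fun σ hσ => hball σ hσ.1)).2 s ⟨hs, hst⟩ t ⟨hst, le_rfl⟩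
  have hGtu : ∀ t : ℝ, 0 ≤ t → Gt (u t) = -((A (u t)).symm (F (u t) - h)) := by
    intro t ht
    simp only [hGt, hG, hPfix _ (hball t ht)]
  refine ⟨u, fun t => Gt (u t), hu0, hball, fun t ht => ⟨hud t, hGtu t ht⟩, ?_, ?_⟩
  · -- uniqueness
    intro v v' hv0 hvball hvd t ht
    have key : Set.EqOn v u (Set.Icc 0 t) := by
      apply ODE_solution_unique (v := fun _ x => Gt x) (K := K) (fun _ => hKlip)
      · exact fun s hs => ((hvd s hs.1).1).continuousAt.continuousWithinAt
      · intro s hs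
        have h1 := (hvd s hs.1).1
        have h2 : v' s = Gt (v s) := by
          rw [(hvd s hs.1).2]
          simp only [hGt, hG, hPfix _ (hvball s hs.1)]
        rw [h2] at h1
        exact h1.hasDerivWithinAt
      · exact fun s _ => (hud s).continuousAt.continuousWithinAt
      · exact fun s _ => (hud s).hasDerivWithinAt
      · rw [hv0, hu0]
    exact key ⟨ht, le_rfl⟩
  · -- limit
    have hexp0 : Filter.Tendsto (fun T : ℝ => Real.exp (-T)) Filter.atTop (nhds 0) :=
      Real.tendsto_exp_atBot.comp tendsto_neg_atTop_atBot
    have htend0 : Filter.Tendsto (fun T : ℝ => c₀⁻¹ * g₀ * Real.exp (-T))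
        Filter.atTop (nhds 0) := by
      simpa using hexp0.const_mul (c₀⁻¹ * g₀)
    have hcau : Cauchy (Filter.map u Filter.atTop) := by
      rw [Metric.cauchy_iff]
      refine ⟨Filter.map_neBot, ?_⟩
      intro ε hε
      obtain ⟨T, hT⟩ := ((htend0.eventually (gt_mem_nhds hε)).and
        (Filter.eventually_ge_atTop (0:ℝ))).exists
      refine ⟨u '' Set.Ici T, Filter.image_mem_map (Filter.Ici_mem_atTop T), ?_⟩
      rintro x ⟨s, hsm, rfl⟩ y ⟨t, htm, rfl⟩
      have key : ∀ s' t' : ℝ, T ≤ s' → s' ≤ t' → dist (u s') (u t') < ε := by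
        intro s' t' hs' hst
        have h0s : 0 ≤ s' := hT.2.trans hs'
        have h2 := hpair s' t' h0s hst
        rw [dist_eq_norm, norm_sub_rev]
        have h3 : Real.exp (-s') - Real.exp (-t') ≤ Real.exp (-T) := by
          have hm := Real.exp_le_exp.2 (neg_le_neg hs')
          have hp := (Real.exp_pos (-t')).le
          linarith
        have h4 : c₀⁻¹ * g₀ * (Real.exp (-s') - Real.exp (-t')) ≤
            c₀⁻¹ * g₀ * Real.exp (-T) :=
          mul_le_mul_of_nonneg_left h3 (mul_nonneg hc₀i.le hg₀0)
        calc ‖u t' - u s'‖ ≤ _ := h2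
          _ ≤ c₀⁻¹ * g₀ * Real.exp (-T) := h4
          _ < ε := hT.1
      rcases le_total s t with hst | hst
      · exact key s t hsm hst
      · rw [dist_comm]; exact key t s htm hst
    obtain ⟨V, hV⟩ := CompleteSpace.complete hcau
    have hVt : Filter.Tendsto u Filter.atTop (nhds V) := hV
    have hVmem : V ∈ Metric.closedBall U R :=
      Metric.isClosed_closedBall.mem_of_tendsto hVt
        ((Filter.eventually_ge_atTop (0:ℝ)).mono (fun t ht => hball t ht))
    have h1 : Filter.Tendsto (fun t => F (u t)) Filter.atTop (nhds (F V)) := by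
      apply (hFcont V hVmem).tendsto.comp
      rw [tendsto_nhdsWithin_iff]
      exact ⟨hVt, (Filter.eventually_ge_atTop (0:ℝ)).mono (fun t ht => hball t ht)⟩
    have h2 : Filter.Tendsto (fun t => F (u t) - h) Filter.atTop (nhds (F V - h)) :=
      h1.sub tendsto_const_nhds
    have h3 : Filter.Tendsto (fun t => F (u t) - h) Filter.atTop (nhds 0) := by
      have he : Filter.Tendsto (fun t : ℝ => Real.exp (-t) • (F u₀ - h)) Filter.atTop
          (nhds ((0:ℝ) • (F u₀ - h))) := hexp0.smul_const _
      rw [zero_smul] at he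
      apply he.congr'
      filter_upwards [Filter.eventually_ge_atTop (0:ℝ)] with t ht
      exact (hFd t ht).symm
    have h4 : F V - h = 0 := tendsto_nhds_unique h2 h3
    exact ⟨V, hVt, by rwa [sub_eq_zero] at h4⟩
end
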